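/- (Claims (i) and (ii) in the proof of Lemma 2.1.) Let (x0, y0, z0) and (x1, y1, z1) be a one-step compatible pair of positive triples. If x0 ≥ y0 > z0, then x1 ≥ y1 > z1 and y1/z1 > y0/z0. -/

import Mathlib

noncomputable section

/-- Δ-Y transfer term `φ(x; y, z) = (x+y)(x+z)/(2(x+y+z))`. -/
def phi (x y z : ℝ) : ℝ := (x + y) * (x + z) / (2 * (x + y + z))

/-- A one-step compatible pair of positive triples. -/
def OneStep (x0 y0 z0 x1 y1 z1 : ℝ) : Prop :=
  0 < x0 ∧ 0 < y0 ∧ 0 < z0 ∧ 0 < x1 ∧ 0 < y1 ∧ 0 < z1 ∧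
  x0 = x1 + phi x1 y1 z1 ∧ y0 = y1 + phi y1 z1 x1 ∧ z0 = z1 + phi z1 x1 y1

theorem stmt7 (x0 y0 z0 x1 y1 z1 : ℝ) (h : OneStep x0 y0 z0 x1 y1 z1)
    (h1 : y0 ≤ x0) (h2 : z0 < y0) :
    y1 ≤ x1 ∧ z1 < y1 ∧ y0 / z0 < y1 / z1 := by
  obtain ⟨hx0, hy0, hz0, hx1, hy1, hz1, ex, ey, ez⟩ := h
  have hs : 0 < x1 + y1 + z1 := by linarith
  have d1 : x1 + y1 + z1 ≠ 0 := ne_of_gt hs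
  rw [ex, ey] at h1
  rw [ey, ez] at h2
  unfold phi at h1 h2 ex ey ez
  simp only [show y1 + z1 + x1 = x1 + y1 + z1 from by ring,
    show z1 + x1 + y1 = x1 + y1 + z1 from by ring] at h1 h2 ey ez
  field_simp at h1 h2
  have hxy : y1 ≤ x1 := by
    by_contra hc
    push_neg at hc
    have hp : 0 < 2 * (x1 + y1 + z1) *
        ((y1 - x1) * (2 * (x1 + y1 + z1) + x1 + y1)) :=
      mul_pos (by positivity) (mul_pos (sub_pos.mpr hc) (by positivity))
    nlinarith [hp]
  have hyz : z1 < y1 := by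
    by_contra hc
    push_neg at hc
    have hp : 0 ≤ 2 * (x1 + y1 + z1) *
        ((z1 - y1) * (2 * (x1 + y1 + z1) + y1 + z1)) :=
      mul_nonneg (by positivity) (mul_nonneg (by linarith) (by positivity))
    nlinarith [hp]
  refine ⟨hxy, hyz, ?_⟩
  rw [div_lt_div_iff₀ hz0 hz1, ey, ez]
  rw [← sub_pos]
  have key : y1 * (z1 + (z1 + x1) * (z1 + y1) / (2 * (x1 + y1 + z1))) -
      (y1 + (y1 + z1) * (y1 + x1) / (2 * (x1 + y1 + z1))) * z1
      = (y1 + z1) * x1 * (y1 - z1) / (2 * (x1 + y1 + z1)) := by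
    field_simp
    ring
  rw [key]
  have hd := sub_pos.mpr hyz
  positivity
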